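/- Let i, b be even nonnegative integers with i ≤ b−2. Let A be the square matrix of size (b−i)/2 whose rows are indexed by r ∈ {i+2, i+4, …, b} (in increasing order), whose columns are indexed by c ∈ {i, i+2, …, b−2} (in increasing order), and whose (r,c)-entry is α(r,c) := (−1)^{(r−c)/2} · r! / (((r−c)/2)! · c! · 2^{(r−c)/2}) if r ≥ c, and 0 if r < c. Then det(A) = (−1)^{(b−i)/2} · b! / (((b−i)/2)! · i! · 2^{(b−i)/2}). -/

import Mathlib

open Finset

/-- The entry `α(r,c) = (-1)^{(r-c)/2} · r! / (((r-c)/2)! · c! · 2^{(r-c)/2})` for `r ≥ c`,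
and `0` for `r < c`. -/
noncomputable def alphaEnt (r c : ℕ) : ℝ :=
  if c ≤ r then
    (-1 : ℝ) ^ ((r - c) / 2) * (Nat.factorial r) /
      ((Nat.factorial ((r - c) / 2)) * (Nat.factorial c) * 2 ^ ((r - c) / 2))
  else 0

noncomputable def aaE (k : ℕ) : ℝ := (-1)^k / (Nat.factorial k * 2^k)
noncomputable def bbE (k : ℕ) : ℝ := 1 / (Nat.factorial k * 2^k)

lemma aaE_zero : aaE 0 = 1 := by simp [aaE]
lemma bbE_zero : bbE 0 = 1 := by simp [bbE]

lemma convE (m : ℕ) : ∑ j ∈ Finset.range (m+1), aaE (m - j) * bbE j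
    = if m = 0 then 1 else 0 := by
  have key : ∀ j ∈ Finset.range (m+1), aaE (m - j) * bbE j
      = ((-1)^m * ((-1)^j * (m.choose j : ℝ))) / (Nat.factorial m * 2^m) := by
    intro j hj
    rw [Finset.mem_range] at hj
    have hjm : j ≤ m := by omega
    have hch : (m.choose j : ℝ) * (Nat.factorial j * Nat.factorial (m - j)) = Nat.factorial m := by
      rw [← Nat.choose_mul_factorial_mul_factorial hjm]; push_cast; ring
    have h2 : (2:ℝ)^(m-j) * 2^j = 2^m := by rw [← pow_add]; congr 1; omega
    have hs : (-1:ℝ)^(m-j) = (-1)^m * (-1)^j := by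
      have : (-1:ℝ)^(m-j) * (-1)^j = (-1)^m := by rw [← pow_add]; congr 1; omega
      have hj1 : (-1:ℝ)^j * (-1)^j = 1 := by rw [← pow_add, Even.neg_one_pow ⟨j, rfl⟩]
      calc (-1:ℝ)^(m-j) = (-1)^(m-j) * ((-1)^j * (-1)^j) := by rw [hj1, mul_one]
        _ = (-1)^m * (-1)^j := by rw [← mul_assoc, this]
    rw [aaE, bbE, hs]
    have hf1 : (Nat.factorial (m-j) : ℝ) ≠ 0 := by exact_mod_cast Nat.factorial_ne_zero _
    have hf2 : (Nat.factorial j : ℝ) ≠ 0 := by exact_mod_cast Nat.factorial_ne_zero _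
    have hf3 : (Nat.factorial m : ℝ) ≠ 0 := by exact_mod_cast Nat.factorial_ne_zero _
    field_simp
    rw [← hch, ← h2]
    ring
  rw [Finset.sum_congr rfl key, ← Finset.sum_div, ← Finset.mul_sum]
  have : ∑ j ∈ Finset.range (m+1), ((-1:ℝ)^j * (m.choose j : ℝ)) = if m = 0 then 1 else 0 := by
    have h := Int.alternating_sum_range_choose (n := m)
    have h2 := congrArg (Int.cast : ℤ → ℝ) h
    push_cast at h2
    convert h2 using 2
  rw [this]
  have hf3 : (Nat.factorial m : ℝ) ≠ 0 := by exact_mod_cast Nat.factorial_ne_zero _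
  split
  · subst ‹m = 0›; simp
  · simp

lemma HmulL_entry (n : ℕ) (t s : Fin n) :
    ∑ u : Fin n, (if (u:ℕ) ≤ (t:ℕ)+1 then aaE ((t:ℕ)+1-(u:ℕ)) else 0) *
        (if (s:ℕ) ≤ (u:ℕ) then bbE ((u:ℕ)-(s:ℕ)) else 0)
      = (if (s:ℕ) = (t:ℕ)+1 then 1 else 0)
        + (if (t:ℕ)+1 = n then -(bbE (n - (s:ℕ))) else 0) := by
  have hs := s.isLt
  have ht := t.isLt
  rw [Fin.sum_univ_eq_sum_range (fun u =>
    (if u ≤ (t:ℕ)+1 then aaE ((t:ℕ)+1-u) else 0) * (if (s:ℕ) ≤ u then bbE (u-(s:ℕ)) else 0))]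
  by_cases hst : (t:ℕ)+1 < (s:ℕ)
  · rw [Finset.sum_eq_zero, if_neg (show ¬((s:ℕ) = (t:ℕ)+1) by omega),
      if_neg (show ¬((t:ℕ)+1 = n) by omega), add_zero]
    intro u hu
    by_cases h1 : u ≤ (t:ℕ)+1
    · rw [if_neg (show ¬((s:ℕ) ≤ u) by omega), mul_zero]
    · rw [if_neg h1, zero_mul]
  · -- s ≤ t+1
    push_neg at hst
    have key : ∑ u ∈ Finset.range n,
        (if u ≤ (t:ℕ)+1 then aaE ((t:ℕ)+1-u) else 0) * (if (s:ℕ) ≤ u then bbE (u-(s:ℕ)) else 0)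
        = ∑ j ∈ Finset.range (min ((t:ℕ)+2) n - (s:ℕ)), aaE ((t:ℕ)+1-(s:ℕ)-j) * bbE j := by
      have hsub : Finset.Ico (s:ℕ) (min ((t:ℕ)+2) n) ⊆ Finset.range n := by
        intro u hu; rw [Finset.mem_Ico] at hu; rw [Finset.mem_range]; omega
      have step1 := (Finset.sum_subset hsub
        (f := fun u => (if u ≤ (t:ℕ)+1 then aaE ((t:ℕ)+1-u) else 0) *
          (if (s:ℕ) ≤ u then bbE (u-(s:ℕ)) else 0)) ?_).symm
      · rw [step1]
        have step2 : ∀ u ∈ Finset.Ico (s:ℕ) (min ((t:ℕ)+2) n),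
            (if u ≤ (t:ℕ)+1 then aaE ((t:ℕ)+1-u) else 0) *
              (if (s:ℕ) ≤ u then bbE (u-(s:ℕ)) else 0)
            = aaE ((t:ℕ)+1-u) * bbE (u-(s:ℕ)) := by
          intro u hu; rw [Finset.mem_Ico] at hu
          rw [if_pos (by omega), if_pos (by omega)]
        rw [Finset.sum_congr rfl step2, Finset.sum_Ico_eq_sum_range]
        apply Finset.sum_congr rfl
        intro j hj; rw [Finset.mem_range] at hj
        congr 1
        · congr 1; omega
        · congr 1; omega
      · intro u hu hnu
        rw [Finset.mem_range] at hu
        rw [Finset.mem_Ico] at hnu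
        by_cases h1 : (s:ℕ) ≤ u
        · rw [if_neg (show ¬(u ≤ (t:ℕ)+1) by omega), zero_mul]
        · rw [if_neg h1, mul_zero]
    rw [key]
    by_cases htn : (t:ℕ)+1 = n
    · have hm : min ((t:ℕ)+2) n - (s:ℕ) = n - (s:ℕ) := by omega
      rw [hm]
      have hmpos : 1 ≤ n - (s:ℕ) := by omega
      have := convE (n - (s:ℕ))
      rw [Finset.sum_range_succ, if_neg (by omega)] at this
      have heq : ∀ j ∈ Finset.range (n - (s:ℕ)),
          aaE ((t:ℕ)+1-(s:ℕ)-j) * bbE j = aaE (n-(s:ℕ)-j) * bbE j := by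
        intro j hj; congr 2; omega
      rw [Finset.sum_congr rfl heq]
      have : ∑ j ∈ Finset.range (n - (s:ℕ)), aaE (n-(s:ℕ)-j) * bbE j
          = - (aaE (n-(s:ℕ)-(n-(s:ℕ))) * bbE (n-(s:ℕ))) := by linarith
      rw [this, Nat.sub_self, aaE_zero, one_mul, if_neg (by omega), if_pos htn, zero_add]
    · have hm : min ((t:ℕ)+2) n - (s:ℕ) = ((t:ℕ)+1-(s:ℕ)) + 1 := by omega
      rw [hm]
      have heq : ∀ j ∈ Finset.range (((t:ℕ)+1-(s:ℕ))+1),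
          aaE ((t:ℕ)+1-(s:ℕ)-j) * bbE j = aaE (((t:ℕ)+1-(s:ℕ))-j) * bbE j := by
        intro j hj; rfl
      rw [Finset.sum_congr rfl heq, convE, if_neg htn, add_zero]
      by_cases h0 : (s:ℕ) = (t:ℕ)+1
      · rw [if_pos (show (t:ℕ)+1-(s:ℕ) = 0 by omega), if_pos h0]
      · rw [if_neg (show ¬((t:ℕ)+1-(s:ℕ) = 0) by omega), if_neg h0]

lemma detL (n : ℕ) :
    (Matrix.of fun t s : Fin n => if (s:ℕ) ≤ (t:ℕ) then bbE ((t:ℕ)-(s:ℕ)) else 0).det = 1 := by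
  rw [Matrix.det_of_lowerTriangular]
  · rw [Finset.prod_congr rfl (fun t _ => by
      show (if (t:ℕ) ≤ (t:ℕ) then bbE ((t:ℕ)-(t:ℕ)) else 0) = 1
      rw [if_pos le_rfl, Nat.sub_self, bbE_zero])]
    exact Finset.prod_const_one
  · intro a b hab
    show (if (b:ℕ) ≤ (a:ℕ) then bbE ((a:ℕ)-(b:ℕ)) else 0) = 0
    rw [if_neg (by exact_mod_cast Nat.not_le.mpr hab)]

lemma detC (m : ℕ) :
    (Matrix.of fun t s : Fin (m+1) =>
      (if (s:ℕ) = (t:ℕ)+1 then (1:ℝ) else 0)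
        + (if (t:ℕ)+1 = m+1 then -(bbE (m+1 - (s:ℕ))) else 0)).det
    = (-1)^(m+1) * bbE (m+1) := by
  rw [Matrix.det_succ_column_zero]
  rw [Finset.sum_eq_single (Fin.last m)]
  · have h0 : ((Fin.last m : Fin (m+1)) : ℕ) = m := rfl
    have hent : (Matrix.of fun t s : Fin (m+1) =>
        (if (s:ℕ) = (t:ℕ)+1 then (1:ℝ) else 0)
          + (if (t:ℕ)+1 = m+1 then -(bbE (m+1 - (s:ℕ))) else 0)) (Fin.last m) 0
        = -(bbE (m+1)) := by
      show (if ((0 : Fin (m+1)):ℕ) = m+1 then (1:ℝ) else 0)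
          + (if m+1 = m+1 then -(bbE (m+1 - ((0 : Fin (m+1)):ℕ))) else 0) = -(bbE (m+1))
      simp
    rw [hent]
    have hminor : ((Matrix.of fun t s : Fin (m+1) =>
        (if (s:ℕ) = (t:ℕ)+1 then (1:ℝ) else 0)
          + (if (t:ℕ)+1 = m+1 then -(bbE (m+1 - (s:ℕ))) else 0)).submatrix
            (Fin.last m).succAbove Fin.succ) = 1 := by
      ext j s
      rw [Matrix.submatrix_apply, Fin.succAbove_last]
      show (if ((s.succ : Fin (m+1)):ℕ) = ((j.castSucc : Fin (m+1)):ℕ)+1 then (1:ℝ) else 0)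
          + (if ((j.castSucc : Fin (m+1)):ℕ)+1 = m+1 then -(bbE (m+1 - ((s.succ : Fin (m+1)):ℕ))) else 0)
          = (1 : Matrix (Fin m) (Fin m) ℝ) j s
      have hj := j.isLt
      rw [Fin.coe_castSucc, Fin.val_succ,
        if_neg (show ¬((j:ℕ)+1 = m+1) by omega), add_zero, Matrix.one_apply]
      by_cases h : j = s
      · rw [if_pos (show (s:ℕ)+1 = (j:ℕ)+1 by rw [h]), if_pos h]
      · have hne : (s:ℕ) ≠ (j:ℕ) := fun hc => h (by ext; omega)
        rw [if_neg (show ¬((s:ℕ)+1 = (j:ℕ)+1) by omega), if_neg h]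
    rw [hminor, Matrix.det_one, mul_one, h0]
    ring_nf
  · intro t _ htl
    have hne : (t:ℕ)+1 ≠ m+1 := by
      intro hc
      exact htl (by ext; simp [Fin.last]; omega)
    have : (Matrix.of fun t s : Fin (m+1) =>
        (if (s:ℕ) = (t:ℕ)+1 then (1:ℝ) else 0)
          + (if (t:ℕ)+1 = m+1 then -(bbE (m+1 - (s:ℕ))) else 0)) t 0 = 0 := by
      show (if ((0 : Fin (m+1)):ℕ) = (t:ℕ)+1 then (1:ℝ) else 0)
          + (if (t:ℕ)+1 = m+1 then -(bbE (m+1 - ((0 : Fin (m+1)):ℕ))) else 0) = 0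
      rw [if_neg (by simp), if_neg hne, add_zero]
    rw [this]; ring
  · intro h; exact absurd (Finset.mem_univ _) h

lemma detH (m : ℕ) :
    (Matrix.of fun t s : Fin (m+1) =>
        if (s:ℕ) ≤ (t:ℕ)+1 then aaE ((t:ℕ)+1-(s:ℕ)) else 0).det
      = (-1)^(m+1) * bbE (m+1) := by
  have hmul : (Matrix.of fun t s : Fin (m+1) =>
        if (s:ℕ) ≤ (t:ℕ)+1 then aaE ((t:ℕ)+1-(s:ℕ)) else 0) *
      (Matrix.of fun t s : Fin (m+1) => if (s:ℕ) ≤ (t:ℕ) then bbE ((t:ℕ)-(s:ℕ)) else 0)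
      = (Matrix.of fun t s : Fin (m+1) =>
        (if (s:ℕ) = (t:ℕ)+1 then (1:ℝ) else 0)
          + (if (t:ℕ)+1 = m+1 then -(bbE (m+1 - (s:ℕ))) else 0)) := by
    ext t s
    rw [Matrix.mul_apply]
    exact HmulL_entry (m+1) t s
  have := congrArg Matrix.det hmul
  rw [Matrix.det_mul, detL, mul_one, detC] at this
  exact this

lemma telesc (i : ℕ) : ∀ n : ℕ,
    (∏ t ∈ Finset.range n, ((Nat.factorial (i+2*(t+1)) : ℝ)))
      * (∏ s ∈ Finset.range n, (1/(Nat.factorial (i+2*s) : ℝ)))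
    = (Nat.factorial (i+2*n) : ℝ) / (Nat.factorial i : ℝ) := by
  intro n
  induction n with
  | zero =>
    simp [div_self (show (Nat.factorial i : ℝ) ≠ 0 by exact_mod_cast Nat.factorial_ne_zero i)]
  | succ n ih =>
    rw [Finset.prod_range_succ, Finset.prod_range_succ, mul_mul_mul_comm, ih]
    have h1 : (Nat.factorial (i+2*n) : ℝ) ≠ 0 := by exact_mod_cast Nat.factorial_ne_zero _
    have h2 : (Nat.factorial i : ℝ) ≠ 0 := by exact_mod_cast Nat.factorial_ne_zero _
    have h3 : i + 2*(n+1) = i + 2*n + 2 := by ring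
    field_simp [h3]

/-- Determinant of the matrix with rows indexed by `{i+2, i+4, …, b}`, columns indexed by
`{i, i+2, …, b-2}`, and entries `α(r,c)`. -/
theorem det_alpha_lower_triangular (i b : ℕ) (hi : Even i) (hb : Even b) (hib : i + 2 ≤ b) :
    (Matrix.of fun t s : Fin ((b - i) / 2) =>
        alphaEnt (i + 2 * ((t : ℕ) + 1)) (i + 2 * (s : ℕ))).det =
      (-1 : ℝ) ^ ((b - i) / 2) * (Nat.factorial b) /
        ((Nat.factorial ((b - i) / 2)) * (Nat.factorial i) * 2 ^ ((b - i) / 2)) := by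
  obtain ⟨x, hx⟩ := hi
  obtain ⟨y, hy⟩ := hb
  obtain ⟨m, hm⟩ : ∃ m : ℕ, b = i + 2 * (m + 1) := ⟨(b - i)/2 - 1, by omega⟩
  subst hm
  have hdiv : (i + 2 * (m+1) - i) / 2 = m + 1 := by omega
  rw [hdiv]
  -- decompose the matrix as D_r * H * D_c
  have hfact : (Matrix.of fun t s : Fin (m+1) =>
        alphaEnt (i + 2 * ((t : ℕ) + 1)) (i + 2 * (s : ℕ)))
      = Matrix.diagonal (fun t : Fin (m+1) => (Nat.factorial (i + 2*((t:ℕ)+1)) : ℝ)) *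
        (Matrix.of fun t s : Fin (m+1) =>
          if (s:ℕ) ≤ (t:ℕ)+1 then aaE ((t:ℕ)+1-(s:ℕ)) else 0) *
        Matrix.diagonal (fun s : Fin (m+1) => 1/(Nat.factorial (i + 2*(s:ℕ)) : ℝ)) := by
    ext t s
    rw [Matrix.mul_diagonal, Matrix.diagonal_mul]
    show alphaEnt (i + 2 * ((t : ℕ) + 1)) (i + 2 * (s : ℕ))
      = (Nat.factorial (i + 2*((t:ℕ)+1)) : ℝ) *
        (if (s:ℕ) ≤ (t:ℕ)+1 then aaE ((t:ℕ)+1-(s:ℕ)) else 0) *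
        (1/(Nat.factorial (i + 2*(s:ℕ)) : ℝ))
    rw [alphaEnt]
    by_cases hle : (s:ℕ) ≤ (t:ℕ)+1
    · rw [if_pos (show i + 2*(s:ℕ) ≤ i + 2*((t:ℕ)+1) by omega), if_pos hle]
      have hk : (i + 2*((t:ℕ)+1) - (i + 2*(s:ℕ))) / 2 = (t:ℕ)+1-(s:ℕ) := by omega
      rw [hk, aaE]
      have h1 : (Nat.factorial ((t:ℕ)+1-(s:ℕ)) : ℝ) ≠ 0 := by
        exact_mod_cast Nat.factorial_ne_zero _
      have h2 : (Nat.factorial (i + 2*(s:ℕ)) : ℝ) ≠ 0 := by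
        exact_mod_cast Nat.factorial_ne_zero _
      field_simp
    · rw [if_neg (show ¬(i + 2*(s:ℕ) ≤ i + 2*((t:ℕ)+1)) by omega), if_neg hle]
      simp
  rw [hfact, Matrix.det_mul, Matrix.det_mul, Matrix.det_diagonal, Matrix.det_diagonal, detH]
  rw [Fin.prod_univ_eq_prod_range (fun t => (Nat.factorial (i + 2*(t+1)) : ℝ)),
    Fin.prod_univ_eq_prod_range (fun s => 1/(Nat.factorial (i + 2*s) : ℝ))]
  have := telesc i (m+1)
  calc (∏ t ∈ Finset.range (m+1), (Nat.factorial (i+2*(t+1)) : ℝ)) *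
        ((-1)^(m+1) * bbE (m+1)) * (∏ s ∈ Finset.range (m+1), 1/(Nat.factorial (i+2*s) : ℝ))
      = ((∏ t ∈ Finset.range (m+1), (Nat.factorial (i+2*(t+1)) : ℝ)) *
          (∏ s ∈ Finset.range (m+1), 1/(Nat.factorial (i+2*s) : ℝ))) *
          ((-1)^(m+1) * bbE (m+1)) := by ring
    _ = ((Nat.factorial (i+2*(m+1)) : ℝ) / (Nat.factorial i : ℝ)) *
          ((-1)^(m+1) * bbE (m+1)) := by rw [this]
    _ = (-1 : ℝ) ^ (m+1) * (Nat.factorial (i+2*(m+1))) /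
        ((Nat.factorial (m+1)) * (Nat.factorial i) * 2 ^ (m+1)) := by
        rw [bbE]
        have h1 : (Nat.factorial (m+1) : ℝ) ≠ 0 := by exact_mod_cast Nat.factorial_ne_zero _
        have h2 : (Nat.factorial i : ℝ) ≠ 0 := by exact_mod_cast Nat.factorial_ne_zero _
        field_simp
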